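/- Let α ∈ ℂ be a nonzero constant. In the algebra of ℂ-linear endomorphisms of ℂ[x], let D be differentiation and X multiplication by x, and define the Dixmier operators L = (D³ + X² + α)² + 2D and M = (D³ + X² + α)³ + 3D⁴ + 3(X² + α)∘D + 3X. Then M and L satisfy the spectral-curve relation M² = L³ − α. -/

import Mathlib

open Polynomial

noncomputable def Dop : Module.End ℂ (Polynomial ℂ) := Polynomial.derivative
noncomputable def Xop : Module.End ℂ (Polynomial ℂ) := LinearMap.mulLeft ℂ Polynomial.X

lemma hDX : Dop * Xop = Xop * Dop + 1 := by
  apply LinearMap.ext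
  intro p
  simp [Dop, Xop, Module.End.mul_apply, derivative_mul, mul_comm, add_comm]

lemma hDX' (y : Module.End ℂ (Polynomial ℂ)) :
    Dop * (Xop * y) = Xop * (Dop * y) + y := by
  rw [← mul_assoc, hDX, add_mul, one_mul, mul_assoc]

noncomputable def Tdix (α : ℂ) : Module.End ℂ (Polynomial ℂ) :=
  Dop ^ 3 + Xop ^ 2 + α • 1

lemma cDT (α : ℂ) : Dop * Tdix α = Tdix α * Dop + (2:ℂ) • Xop := by
  simp only [Tdix, pow_succ, pow_zero, one_mul, mul_add, add_mul, mul_assoc,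
    smul_mul_assoc, mul_smul_comm, hDX', hDX, mul_one]
  module

lemma cDT' (α : ℂ) (y : Module.End ℂ (Polynomial ℂ)) :
    Dop * (Tdix α * y) = Tdix α * (Dop * y) + (2:ℂ) • (Xop * y) := by
  rw [← mul_assoc, cDT, add_mul, smul_mul_assoc, mul_assoc]

lemma cTX (α : ℂ) : Tdix α * Xop = Xop * Tdix α + (3:ℂ) • (Dop * Dop) := by
  simp only [Tdix, pow_succ, pow_zero, one_mul, mul_add, add_mul, mul_assoc,
    smul_mul_assoc, mul_smul_comm, hDX', hDX, mul_one]
  module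

lemma cTX' (α : ℂ) (y : Module.End ℂ (Polynomial ℂ)) :
    Tdix α * (Xop * y) = Xop * (Tdix α * y) + (3:ℂ) • (Dop * (Dop * y)) := by
  rw [← mul_assoc, cTX, add_mul, smul_mul_assoc, mul_assoc, mul_assoc]

set_option maxHeartbeats 4000000 in
lemma main_identity (α : ℂ) :
    ((Tdix α) ^ 3 + (3:ℂ) • (Tdix α * Dop) + (3:ℂ) • Xop) ^ 2 + Tdix α
      = ((Tdix α) ^ 2 + 2 • Dop) ^ 3 + Dop * (Dop * Dop) + Xop * Xop := by
  simp only [show (2:ℕ) • Dop = Dop + Dop from two_smul ℕ Dop]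
  simp only [pow_succ, pow_zero, one_mul, mul_add, add_mul, smul_mul_assoc,
    mul_smul_comm, smul_add, smul_smul, mul_one, mul_assoc, hDX, hDX', cDT, cDT', cTX, cTX']
  module

/-- The Dixmier operators `L = (D³ + X² + α)² + 2D` and
`M = (D³ + X² + α)³ + 3D⁴ + 3(X² + α)∘D + 3X` satisfy the spectral-curve
relation `M² = L³ − α`. -/
theorem dixmier_rank3_spectral_curve (α : ℂ) (hα : α ≠ 0) :
    letI one : Module.End ℂ (Polynomial ℂ) := 1
    letI L : Module.End ℂ (Polynomial ℂ) :=
      (Dop ^ 3 + Xop ^ 2 + α • one) ^ 2 + 2 • Dop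
    letI M : Module.End ℂ (Polynomial ℂ) :=
      (Dop ^ 3 + Xop ^ 2 + α • one) ^ 3 + 3 • (Dop ^ 4)
        + 3 • ((Xop ^ 2 + α • one) * Dop) + 3 • Xop
    M ^ 2 = L ^ 3 - α • one := by
  rw [show Dop ^ 3 + Xop ^ 2 + α • (1:Module.End ℂ (Polynomial ℂ)) = Tdix α from rfl]
  have hM : (Tdix α) ^ 3 + 3 • (Dop ^ 4) + 3 • ((Xop ^ 2 + α • (1:Module.End ℂ (Polynomial ℂ))) * Dop) + 3 • Xop
      = (Tdix α) ^ 3 + (3:ℂ) • (Tdix α * Dop) + (3:ℂ) • Xop := by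
    have e1 : Xop ^ 2 + α • (1:Module.End ℂ (Polynomial ℂ)) = Tdix α - Dop ^ 3 := by
      rw [Tdix]; abel
    rw [e1, sub_mul]
    simp only [show ∀ x : Module.End ℂ (Polynomial ℂ), (3:ℕ) • x = (3:ℂ) • x from fun x =>
      (Nat.cast_smul_eq_nsmul ℂ 3 x).symm]
    rw [show Dop ^ 3 * Dop = Dop ^ 4 from (pow_succ Dop 3).symm]
    rw [smul_sub]
    abel
  rw [hM]
  have hT : Tdix α = Dop * (Dop * Dop) + Xop * Xop + α • (1:Module.End ℂ (Polynomial ℂ)) := by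
    rw [Tdix]
    simp only [pow_succ, pow_zero, one_mul, mul_assoc]
  calc ((Tdix α) ^ 3 + (3:ℂ) • (Tdix α * Dop) + (3:ℂ) • Xop) ^ 2
      = (((Tdix α) ^ 3 + (3:ℂ) • (Tdix α * Dop) + (3:ℂ) • Xop) ^ 2 + Tdix α) - Tdix α := by abel
    _ = (((Tdix α) ^ 2 + 2 • Dop) ^ 3 + Dop * (Dop * Dop) + Xop * Xop) - Tdix α := by
        rw [main_identity]
    _ = ((Tdix α) ^ 2 + 2 • Dop) ^ 3 - α • (1:Module.End ℂ (Polynomial ℂ)) := by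
        rw [hT]; abel
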